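/- Let H ∈ (0,1) and T > 0. Define, for 0 < h and φ(h) ≤ t ≤ T − h, Q(t,h) := (4 − 2^{2H}) h^{2H} − 2^{2H−1}(t+h)^{2H} − 3·2^{2H} t^{2H} − 2^{2H−1}(t−h)^{2H} + 2(2t+h)^{2H} + 2(2t−h)^{2H} (this equals E[(S^H_{t+h} − 2S^H_t + S^H_{t−h})²] for the sub-fractional Brownian motion S^H). Then for every φ ∈ Ψ, lim_{h→0+} sup_{φ(h)≤t≤T−h} | Q(t,h)/h^{2H} − (4 − 2^{2H}) | = 0; i.e. the sub-fractional Brownian motion satisfies the hypothesis of the regular-partition convergence result with g₀(t) ≡ 4 − 2^{2H} and γ = H. -/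

import Mathlib

open Real Set Filter

/-- The class Ψ of continuous functions `φ : (0,T] → [0,∞)` with `φ(h) → 0`,
`L(h) = φ(h)/h → ∞` and `h·L(h)³ → 0` as `h ↓ 0`. -/
def MemPsi (T : ℝ) (φ : ℝ → ℝ) : Prop :=
  ContinuousOn φ (Ioc 0 T) ∧ (∀ h ∈ Ioc (0:ℝ) T, 0 ≤ φ h) ∧
  Tendsto φ (nhdsWithin 0 (Ioi 0)) (nhds 0) ∧
  Tendsto (fun h => φ h / h) (nhdsWithin 0 (Ioi 0)) atTop ∧
  Tendsto (fun h => h * (φ h / h) ^ 3) (nhdsWithin 0 (Ioi 0)) (nhds 0)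

/-- `Q(t,h) = E[(S^H_{t+h} − 2S^H_t + S^H_{t−h})²]` for sub-fractional Brownian motion. -/
noncomputable def subfBmQ (H t h : ℝ) : ℝ :=
  (4 - 2 ^ (2*H)) * h ^ (2*H) - 2 ^ (2*H - 1) * (t + h) ^ (2*H) - 3 * 2 ^ (2*H) * t ^ (2*H)
    - 2 ^ (2*H - 1) * (t - h) ^ (2*H) + 2 * (2*t + h) ^ (2*H) + 2 * (2*t - h) ^ (2*H)

lemma hasDerivAt_affine_rpow (p t d x : ℝ) (hx : t + d * x ≠ 0) :
    HasDerivAt (fun u => (t + d * u) ^ p) (p * (t + d * x) ^ (p - 1) * d) x := by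
  have h1 : HasDerivAt (fun u : ℝ => t + d * u) d x := by
    simpa using ((hasDerivAt_id x).const_mul d).const_add t
  have := (Real.hasDerivAt_rpow_const (p := p) (Or.inl hx)).comp x h1
  simpa [Function.comp_def, mul_assoc] using this

set_option maxHeartbeats 1000000 in
lemma psi_bound (p t h : ℝ) (hp0 : 0 < p) (hp2 : p < 2) (hh : 0 < h) (hth : 2 * h ≤ t) :
    |2 * (t + h / 2) ^ p + 2 * (t - h / 2) ^ p - 1 / 2 * (t + h) ^ p - 1 / 2 * (t - h) ^ p
      - 3 * t ^ p| ≤ 4 * (t - h) ^ (p - 2) * h ^ 2 := by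
  have hth' : 0 < t - h := by linarith
  set ψ : ℝ → ℝ := fun u => 2 * (t + (1/2) * u) ^ p + 2 * (t + (-(1/2)) * u) ^ p
      - 1/2 * (t + 1 * u) ^ p - 1/2 * (t + (-1) * u) ^ p - 3 * t ^ p with hψdef
  set ψ1 : ℝ → ℝ := fun u => p * ((t + (1/2) * u) ^ (p-1) - (t + (-(1/2)) * u) ^ (p-1)
      - 1/2 * (t + 1 * u) ^ (p-1) + 1/2 * (t + (-1) * u) ^ (p-1)) with hψ1def
  set ψ2 : ℝ → ℝ := fun u => p * ((p-1) * (1/2 * (t + (1/2) * u) ^ (p-2)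
      + 1/2 * (t + (-(1/2)) * u) ^ (p-2)
      - 1/2 * (t + 1 * u) ^ (p-2) - 1/2 * (t + (-1) * u) ^ (p-2))) with hψ2def
  set s : Set ℝ := Icc 0 h with hsdef
  have hbase : ∀ d : ℝ, d ∈ ({1/2, -(1/2), 1, -1} : Set ℝ) → ∀ x ∈ s, t - h ≤ t + d * x := by
    intro d hd x hx
    simp only [hsdef, mem_Icc] at hx
    rcases hd with rfl | rfl | rfl | rfl <;> nlinarith [hx.1, hx.2]
  have hpos : ∀ d : ℝ, d ∈ ({1/2, -(1/2), 1, -1} : Set ℝ) → ∀ x ∈ s, 0 < t + d * x := by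
    intro d hd x hx; have := hbase d hd x hx; linarith
  have memd : ∀ d ∈ ({1/2, -(1/2), 1, -1} : Set ℝ), True := fun _ _ => trivial
  have hd1 : ∀ x ∈ s, HasDerivWithinAt ψ (ψ1 x) s x := by
    intro x hx
    have h1 := hasDerivAt_affine_rpow p t (1/2) x (ne_of_gt (hpos _ (by norm_num) x hx))
    have h2 := hasDerivAt_affine_rpow p t (-(1/2)) x (ne_of_gt (hpos _ (by norm_num) x hx))
    have h3 := hasDerivAt_affine_rpow p t 1 x (ne_of_gt (hpos _ (by norm_num) x hx))
    have h4 := hasDerivAt_affine_rpow p t (-1) x (ne_of_gt (hpos _ (by norm_num) x hx))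
    have : HasDerivAt ψ (2 * (p * (t + 1/2 * x) ^ (p-1) * (1/2))
        + 2 * (p * (t + (-(1/2)) * x) ^ (p-1) * (-(1/2)))
        - 1/2 * (p * (t + 1 * x) ^ (p-1) * 1) - 1/2 * (p * (t + (-1) * x) ^ (p-1) * (-1)) - 0) x := by
      exact ((((h1.const_mul 2).add (h2.const_mul 2)).sub (h3.const_mul (1/2))).sub
        (h4.const_mul (1/2))).sub (hasDerivAt_const x (3 * t ^ p))
    have heq : ψ1 x = 2 * (p * (t + 1/2 * x) ^ (p-1) * (1/2))
        + 2 * (p * (t + (-(1/2)) * x) ^ (p-1) * (-(1/2)))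
        - 1/2 * (p * (t + 1 * x) ^ (p-1) * 1) - 1/2 * (p * (t + (-1) * x) ^ (p-1) * (-1)) - 0 := by
      simp only [hψ1def]; ring
    rw [← heq] at this
    exact this.hasDerivWithinAt
  have hd2 : ∀ x ∈ s, HasDerivWithinAt ψ1 (ψ2 x) s x := by
    intro x hx
    have h1 := hasDerivAt_affine_rpow (p-1) t (1/2) x (ne_of_gt (hpos _ (by norm_num) x hx))
    have h2 := hasDerivAt_affine_rpow (p-1) t (-(1/2)) x (ne_of_gt (hpos _ (by norm_num) x hx))
    have h3 := hasDerivAt_affine_rpow (p-1) t 1 x (ne_of_gt (hpos _ (by norm_num) x hx))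
    have h4 := hasDerivAt_affine_rpow (p-1) t (-1) x (ne_of_gt (hpos _ (by norm_num) x hx))
    have : HasDerivAt ψ1 (p * (((p-1) * (t + 1/2 * x) ^ (p-1-1) * (1/2))
        - ((p-1) * (t + (-(1/2)) * x) ^ (p-1-1) * (-(1/2)))
        - 1/2 * ((p-1) * (t + 1 * x) ^ (p-1-1) * 1)
        + 1/2 * ((p-1) * (t + (-1) * x) ^ (p-1-1) * (-1)))) x := by
      exact ((((h1.sub h2).sub (h3.const_mul (1/2))).add (h4.const_mul (1/2))).const_mul p)
    have heq : ψ2 x = p * (((p-1) * (t + 1/2 * x) ^ (p-1-1) * (1/2))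
        - ((p-1) * (t + (-(1/2)) * x) ^ (p-1-1) * (-(1/2)))
        - 1/2 * ((p-1) * (t + 1 * x) ^ (p-1-1) * 1)
        + 1/2 * ((p-1) * (t + (-1) * x) ^ (p-1-1) * (-1))) := by
      simp only [hψ2def]
      rw [show p - 1 - 1 = p - 2 by ring]; ring
    rw [← heq] at this
    exact this.hasDerivWithinAt
  -- bound second derivative
  set B : ℝ := (t - h) ^ (p - 2) with hBdef
  have hB0 : 0 ≤ B := Real.rpow_nonneg hth'.le _
  have hbnd2 : ∀ x ∈ s, ‖ψ2 x‖ ≤ 2 * B := by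
    intro x hx
    have key : ∀ d : ℝ, d ∈ ({1/2, -(1/2), 1, -1} : Set ℝ) →
        0 ≤ (t + d * x) ^ (p-2) ∧ (t + d * x) ^ (p-2) ≤ B := by
      intro d hd
      exact ⟨Real.rpow_nonneg (hpos d hd x hx).le _,
        Real.rpow_le_rpow_of_nonpos hth' (hbase d hd x hx) (by linarith)⟩
    obtain ⟨a1, b1⟩ := key (1/2) (by norm_num)
    obtain ⟨a2, b2⟩ := key (-(1/2)) (by norm_num)
    obtain ⟨a3, b3⟩ := key 1 (by norm_num)
    obtain ⟨a4, b4⟩ := key (-1) (by norm_num)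
    have hX : |1/2 * (t + (1/2) * x) ^ (p-2) + 1/2 * (t + (-(1/2)) * x) ^ (p-2)
        - 1/2 * (t + 1 * x) ^ (p-2) - 1/2 * (t + (-1) * x) ^ (p-2)| ≤ B := by
      rw [abs_le]; constructor <;> [linarith; linarith]
    have hp1 : |p - 1| ≤ 1 := by rw [abs_le]; constructor <;> linarith
    rw [Real.norm_eq_abs, hψ2def]
    simp only
    rw [abs_mul, abs_mul, abs_of_pos hp0]
    have step : |p - 1| * |1/2 * (t + (1/2) * x) ^ (p-2) + 1/2 * (t + (-(1/2)) * x) ^ (p-2)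
        - 1/2 * (t + 1 * x) ^ (p-2) - 1/2 * (t + (-1) * x) ^ (p-2)| ≤ 1 * B :=
      mul_le_mul hp1 hX (abs_nonneg _) zero_le_one
    calc p * (|p - 1| * |1/2 * (t + (1/2) * x) ^ (p-2) + 1/2 * (t + (-(1/2)) * x) ^ (p-2)
        - 1/2 * (t + 1 * x) ^ (p-2) - 1/2 * (t + (-1) * x) ^ (p-2)|)
        ≤ 2 * (1 * B) := mul_le_mul hp2.le step (by positivity) (by norm_num)
      _ = 2 * B := by ring
  have hconv : Convex ℝ s := convex_Icc 0 h
  have h0s : (0:ℝ) ∈ s := by simp [hsdef, hh.le]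
  have hψ10 : ψ1 0 = 0 := by simp only [hψ1def]; norm_num
  have hbnd1 : ∀ x ∈ s, ‖ψ1 x‖ ≤ (2 * B) * h := by
    intro x hx
    have := hconv.norm_image_sub_le_of_norm_hasDerivWithin_le hd2 hbnd2 h0s hx
    rw [hψ10, sub_zero] at this
    have hx' : ‖x - 0‖ ≤ h := by
      simp only [hsdef, mem_Icc] at hx
      rw [sub_zero, Real.norm_eq_abs, abs_of_nonneg hx.1]; exact hx.2
    calc ‖ψ1 x‖ ≤ 2 * B * ‖x - 0‖ := this
      _ ≤ 2 * B * h := by nlinarith [norm_nonneg (x - 0)]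
  have hhs : h ∈ s := by simp [hsdef, hh.le]
  have hψ0 : ψ 0 = 0 := by simp only [hψdef]; norm_num; ring
  have final := hconv.norm_image_sub_le_of_norm_hasDerivWithin_le hd1 hbnd1 h0s hhs
  rw [hψ0, sub_zero, sub_zero, Real.norm_eq_abs, Real.norm_eq_abs, abs_of_pos hh] at final
  have hψh : ψ h = 2 * (t + h / 2) ^ p + 2 * (t - h / 2) ^ p - 1 / 2 * (t + h) ^ p
      - 1 / 2 * (t - h) ^ p - 3 * t ^ p := by
    simp only [hψdef]; ring_nf
  rw [hψh] at final
  calc |2 * (t + h / 2) ^ p + 2 * (t - h / 2) ^ p - 1 / 2 * (t + h) ^ p - 1 / 2 * (t - h) ^ p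
      - 3 * t ^ p| ≤ 2 * B * h * h := final
    _ ≤ 4 * B * h ^ 2 := by nlinarith

lemma core_bound (H t h : ℝ) (hH1 : 0 < H) (hH2 : H < 1) (hh : 0 < h) (hth : 2 * h ≤ t) :
    |subfBmQ H t h / h ^ (2*H) - (4 - 2 ^ (2*H))| ≤ 64 * (t / h) ^ (2*H - 2) := by
  set p : ℝ := 2 * H with hpdef
  have hp0 : 0 < p := by positivity
  have hp2 : p < 2 := by simp only [hpdef]; linarith
  have ht0 : 0 < t := by linarith
  have hhp : 0 < h ^ p := Real.rpow_pos_of_pos hh p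
  have r2 : (2:ℝ) ^ (p - 1) = 2 ^ p / 2 := by
    rw [Real.rpow_sub two_pos, Real.rpow_one]
  have mul1 : (2*t + h) ^ p = 2 ^ p * (t + h/2) ^ p := by
    rw [show 2*t + h = 2 * (t + h/2) by ring, Real.mul_rpow (by norm_num) (by linarith)]
  have mul2 : (2*t - h) ^ p = 2 ^ p * (t - h/2) ^ p := by
    rw [show 2*t - h = 2 * (t - h/2) by ring, Real.mul_rpow (by norm_num) (by linarith)]
  have hQ : subfBmQ H t h = (4 - 2 ^ p) * h ^ p + 2 ^ p * (2 * (t + h/2) ^ p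
      + 2 * (t - h/2) ^ p - 1/2 * (t + h) ^ p - 1/2 * (t - h) ^ p - 3 * t ^ p) := by
    rw [subfBmQ, ← hpdef, mul1, mul2, r2]; ring
  have h2p0 : (0:ℝ) < 2 ^ p := Real.rpow_pos_of_pos two_pos p
  have heq : subfBmQ H t h / h ^ p - (4 - 2 ^ p) = 2 ^ p * (2 * (t + h/2) ^ p
      + 2 * (t - h/2) ^ p - 1/2 * (t + h) ^ p - 1/2 * (t - h) ^ p - 3 * t ^ p) / h ^ p := by
    rw [hQ]; field_simp; ring
  rw [heq, abs_div, abs_of_pos hhp, abs_mul, abs_of_pos h2p0]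
  have hψ := psi_bound p t h hp0 hp2 hh hth
  have h2two : (2:ℝ) ^ (2:ℝ) = 4 := by
    rw [show (2:ℝ) = ((2:ℕ):ℝ) from by norm_num]
    rw [Real.rpow_natCast]; norm_num
  have h2p4 : (2:ℝ) ^ p ≤ 4 := by
    calc (2:ℝ) ^ p ≤ 2 ^ (2:ℝ) := Real.rpow_le_rpow_of_exponent_le one_le_two (by linarith)
      _ = 4 := h2two
  have htb : (t - h) ^ (p - 2) ≤ 4 * t ^ (p - 2) := by
    have s1 : (t - h) ^ (p - 2) ≤ (t/2) ^ (p - 2) :=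
      Real.rpow_le_rpow_of_nonpos (by linarith) (by linarith) (by linarith)
    have s2 : (t/2 : ℝ) ^ (p - 2) = t ^ (p - 2) * ((2:ℝ) ^ (p - 2))⁻¹ := by
      rw [show (t/2 : ℝ) = t * 2⁻¹ by ring, Real.mul_rpow ht0.le (by norm_num),
        Real.inv_rpow (by norm_num)]
    have s3 : ((2:ℝ) ^ (p - 2))⁻¹ = (2:ℝ) ^ (2 - p) := by
      rw [← Real.rpow_neg (by norm_num), neg_sub]
    have s4 : (2:ℝ) ^ (2 - p) ≤ 4 := by
      calc (2:ℝ) ^ (2 - p) ≤ 2 ^ (2:ℝ) := Real.rpow_le_rpow_of_exponent_le one_le_two (by linarith)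
        _ = 4 := h2two
    have ht0' : 0 ≤ t ^ (p - 2) := Real.rpow_nonneg ht0.le _
    calc (t - h) ^ (p - 2) ≤ t ^ (p - 2) * (2:ℝ) ^ (2 - p) := by rw [← s3, ← s2]; exact s1
      _ ≤ t ^ (p - 2) * 4 := by nlinarith
      _ = 4 * t ^ (p - 2) := by ring
  have hnum : 2 ^ p * |2 * (t + h/2) ^ p + 2 * (t - h/2) ^ p - 1/2 * (t + h) ^ p
      - 1/2 * (t - h) ^ p - 3 * t ^ p| ≤ 64 * t ^ (p - 2) * h ^ 2 := by
    have habs0 := abs_nonneg (2 * (t + h/2) ^ p + 2 * (t - h/2) ^ p - 1/2 * (t + h) ^ p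
      - 1/2 * (t - h) ^ p - 3 * t ^ p)
    have hth0 : 0 ≤ (t - h) ^ (p - 2) := Real.rpow_nonneg (by linarith) _
    nlinarith [sq_nonneg h, Real.rpow_nonneg ht0.le (p - 2)]
  have hfin : 64 * t ^ (p - 2) * h ^ 2 / h ^ p = 64 * (t / h) ^ (p - 2) := by
    have e1 : (t / h) ^ (p - 2) = t ^ (p - 2) * (h ^ (p - 2))⁻¹ := by
      rw [show t / h = t * h⁻¹ by ring, Real.mul_rpow ht0.le (by positivity),
        Real.inv_rpow hh.le]
    have e2 : (h ^ (p - 2))⁻¹ = h ^ (2 - p) := by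
      rw [← Real.rpow_neg hh.le, neg_sub]
    have e3 : h ^ (2 - p) = h ^ (2:ℝ) / h ^ p := Real.rpow_sub hh 2 p
    have e4 : h ^ (2:ℝ) = h ^ (2:ℕ) := by
      rw [show ((2:ℝ)) = ((2:ℕ):ℝ) from by norm_num, Real.rpow_natCast]
    rw [e1, e2, e3, e4]; ring
  calc 2 ^ p * |2 * (t + h/2) ^ p + 2 * (t - h/2) ^ p - 1/2 * (t + h) ^ p
      - 1/2 * (t - h) ^ p - 3 * t ^ p| / h ^ p
      ≤ 64 * t ^ (p - 2) * h ^ 2 / h ^ p := by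
        apply div_le_div_of_nonneg_right hnum hhp.le
    _ = 64 * (t / h) ^ (p - 2) := hfin


/-- For the sub-fractional Brownian motion and any `φ ∈ Ψ`,
`sup_{φ(h)≤t≤T−h} |Q(t,h)/h^{2H} − (4 − 2^{2H})| → 0` as `h ↓ 0`; i.e. the hypothesis
of the regular-partition convergence result holds with `g₀ ≡ 4 − 2^{2H}` and `γ = H`. -/
theorem subfBm_second_diff_convergence (H T : ℝ) (hH : H ∈ Set.Ioo (0:ℝ) 1) (hT : 0 < T)
    (φ : ℝ → ℝ) (hφ : MemPsi T φ) :
    Tendsto (fun h => ⨆ t ∈ Icc (φ h) (T - h), |subfBmQ H t h / h ^ (2*H) - (4 - 2 ^ (2*H))|)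
      (nhdsWithin 0 (Ioi 0)) (nhds 0) := by
  obtain ⟨-, -, -, hL, -⟩ := hφ
  obtain ⟨hH1, hH2⟩ := hH
  have hbnd : Tendsto (fun h => 64 * (φ h / h) ^ (2*H - 2)) (nhdsWithin 0 (Ioi 0)) (nhds 0) := by
    have h1 : Tendsto (fun x : ℝ => x ^ (2*H - 2)) atTop (nhds 0) := by
      have := tendsto_rpow_neg_atTop (y := 2 - 2*H) (by linarith)
      simpa [show -(2 - 2*H) = 2*H - 2 by ring] using this
    have h2 := h1.comp hL
    have h3 := h2.const_mul (64:ℝ)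
    simpa [Function.comp] using h3
  apply squeeze_zero' (Eventually.of_forall fun h =>
    Real.iSup_nonneg fun t => Real.iSup_nonneg fun _ => abs_nonneg _) ?_ hbnd
  filter_upwards [hL.eventually_ge_atTop 2, self_mem_nhdsWithin] with h h2L hmem
  have hh : 0 < h := hmem
  have hφpos : 0 < φ h / h := lt_of_lt_of_le two_pos h2L
  have hB0 : (0:ℝ) ≤ 64 * (φ h / h) ^ (2*H - 2) := by positivity
  refine Real.iSup_le (fun t => Real.iSup_le (fun ht => ?_) hB0) hB0
  have hφh : 2 * h ≤ φ h := by
    rw [le_div_iff₀ hh] at h2L; linarith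
  have h2t : 2 * h ≤ t := le_trans hφh ht.1
  refine le_trans (core_bound H t h hH1 hH2 hh h2t) ?_
  have hmono : (t / h) ^ (2*H - 2) ≤ (φ h / h) ^ (2*H - 2) :=
    Real.rpow_le_rpow_of_nonpos hφpos
      (div_le_div_of_nonneg_right ht.1 hh.le) (by linarith)
  linarith
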